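/- For all r ≥ 1 and all scalars x, x', the transfer matrices commute: [A_r(x)+D_r(x), A_r(x')+D_r(x')] = 0, where A_r, D_r come from the coproduct recursion for the 4×4 eight-vertex braid matrix R̂(x) = I₄ + x K⊗K. -/

import Mathlib

open Matrix Kronecker

/-- Index type for `2^(n+1) × 2^(n+1)` matrices (level `r = n+1`). -/
def Idx : ℕ → Type
  | 0 => Fin 2
  | n + 1 => Fin 2 × Idx n

instance Idx.fintype : (n : ℕ) → Fintype (Idx n)
  | 0 => inferInstanceAs (Fintype (Fin 2))
  | n + 1 => letI := Idx.fintype n; inferInstanceAs (Fintype (Fin 2 × Idx n))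

instance Idx.decEq : (n : ℕ) → DecidableEq (Idx n)
  | 0 => inferInstanceAs (DecidableEq (Fin 2))
  | n + 1 => letI := Idx.decEq n; inferInstanceAs (DecidableEq (Fin 2 × Idx n))

def A1 (x : ℝ) : Matrix (Fin 2) (Fin 2) ℝ := !![1, 0; 0, x]
def B1 (x : ℝ) : Matrix (Fin 2) (Fin 2) ℝ := !![0, x; 1, 0]
def C1 (x : ℝ) : Matrix (Fin 2) (Fin 2) ℝ := !![0, 1; x, 0]
def D1 (x : ℝ) : Matrix (Fin 2) (Fin 2) ℝ := !![x, 0; 0, 1]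

/-- The quadruple `(A_r, B_r, C_r, D_r)` at level `r = n+1`, via the coproduct recursion. -/
def ABCD (x : ℝ) : (n : ℕ) →
    (Matrix (Idx n) (Idx n) ℝ × Matrix (Idx n) (Idx n) ℝ ×
      Matrix (Idx n) (Idx n) ℝ × Matrix (Idx n) (Idx n) ℝ)
  | 0 => (A1 x, B1 x, C1 x, D1 x)
  | n + 1 =>
    let p := ABCD x n
    (A1 x ⊗ₖ p.1 + B1 x ⊗ₖ p.2.2.1,
     A1 x ⊗ₖ p.2.1 + B1 x ⊗ₖ p.2.2.2,
     C1 x ⊗ₖ p.1 + D1 x ⊗ₖ p.2.2.1,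
     D1 x ⊗ₖ p.2.2.2 + C1 x ⊗ₖ p.2.1)

def Amat (x : ℝ) (n : ℕ) : Matrix (Idx n) (Idx n) ℝ := (ABCD x n).1
def Bmat (x : ℝ) (n : ℕ) : Matrix (Idx n) (Idx n) ℝ := (ABCD x n).2.1
def Cmat (x : ℝ) (n : ℕ) : Matrix (Idx n) (Idx n) ℝ := (ABCD x n).2.2.1
def Dmat (x : ℝ) (n : ℕ) : Matrix (Idx n) (Idx n) ℝ := (ABCD x n).2.2.2

def Kmat : Matrix (Fin 2) (Fin 2) ℝ := !![0, 1; 1, 0]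

/-- `K_{(r)} = I_{2^{r-1}} ⊗ K` at level `r = n+1`. -/
def Kr : (n : ℕ) → Matrix (Idx n) (Idx n) ℝ
  | 0 => Kmat
  | n + 1 => (1 : Matrix (Fin 2) (Fin 2) ℝ) ⊗ₖ Kr n

/-- `K^{⊗r}` at level `r = n+1`. -/
def Kpow : (n : ℕ) → Matrix (Idx n) (Idx n) ℝ
  | 0 => Kmat
  | n + 1 => Kmat ⊗ₖ Kpow n

/-! ### Auxiliary generic development -/

section Generic
variable {R : Type} [CommRing R]

/-- Entries of the level-one monodromy matrix, over a generic commutative ring. -/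
def T1g (x : R) : Fin 2 → Fin 2 → Matrix (Fin 2) (Fin 2) R :=
  ![![!![1, 0; 0, x], !![0, x; 1, 0]], ![!![0, 1; x, 0], !![x, 0; 0, 1]]]

lemma T1g_00 (x : R) : T1g x 0 0 = !![1, 0; 0, x] := rfl
lemma T1g_01 (x : R) : T1g x 0 1 = !![0, x; 1, 0] := rfl
lemma T1g_10 (x : R) : T1g x 1 0 = !![0, 1; x, 0] := rfl
lemma T1g_11 (x : R) : T1g x 1 1 = !![x, 0; 0, 1] := rfl

/-- The monodromy matrix entries at level `r = n+1`, generic ring. -/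
def Tg (x : R) : (n : ℕ) → Fin 2 → Fin 2 → Matrix (Idx n) (Idx n) R
  | 0 => T1g x
  | n + 1 => fun i k => ∑ j : Fin 2, T1g x i j ⊗ₖ Tg x n j k

lemma Tg_succ (x : R) (n : ℕ) (i k : Fin 2) :
    Tg x (n + 1) i k = ∑ j : Fin 2, T1g x i j ⊗ₖ Tg x n j k := rfl

set_option maxHeartbeats 1600000 in
/-- The level-one RTT exchange relation. -/
lemma rtt0 (x y : R) (a b c d : Fin 2) :
    (1 - x*y) • (T1g x a c * T1g y b d) + (x - y) • (T1g x (a+1) c * T1g y (b+1) d)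
      = (1 - x*y) • (T1g y a c * T1g x b d) + (x - y) • (T1g y a (c+1) * T1g x b (d+1)) := by
  fin_cases a <;> fin_cases b <;> fin_cases c <;> fin_cases d <;>
    · simp only [Fin.mk_zero, Fin.mk_one, show (0:Fin 2)+1=1 by decide,
        show (1:Fin 2)+1=0 by decide, T1g_00, T1g_01, T1g_10, T1g_11]
      ext i j
      fin_cases i <;> fin_cases j <;>
          simp [Matrix.mul_apply, Fin.sum_univ_two, Fin.mk_zero, Fin.mk_one] <;> ring

lemma kron_comb {n : ℕ} (μ δ : R) (P P' : Matrix (Fin 2) (Fin 2) R)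
    (Q : Matrix (Idx n) (Idx n) R) :
    μ • (P ⊗ₖ Q) + δ • (P' ⊗ₖ Q) = (μ • P + δ • P') ⊗ₖ Q := by
  rw [Matrix.add_kronecker, Matrix.smul_kronecker, Matrix.smul_kronecker]

lemma kron_comb' {n : ℕ} (μ δ : R) (P : Matrix (Fin 2) (Fin 2) R)
    (Q Q' : Matrix (Idx n) (Idx n) R) :
    μ • (P ⊗ₖ Q) + δ • (P ⊗ₖ Q') = P ⊗ₖ (μ • Q + δ • Q') := by
  rw [Matrix.kronecker_add, Matrix.kronecker_smul, Matrix.kronecker_smul]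

lemma sum_flip {M : Type*} [AddCommMonoid M] (f : Fin 2 → M) :
    (∑ j : Fin 2, f (j + 1)) = ∑ j : Fin 2, f j := by
  rw [Fin.sum_univ_two, Fin.sum_univ_two, show (0:Fin 2)+1=1 by decide,
    show (1:Fin 2)+1=0 by decide, add_comm]

lemma sum_flip2 {M : Type*} [AddCommMonoid M] (f : Fin 2 → Fin 2 → M) :
    (∑ j : Fin 2, ∑ j' : Fin 2, f (j + 1) (j' + 1)) = ∑ j : Fin 2, ∑ j' : Fin 2, f j j' := by
  simp only [Fin.sum_univ_two, show (0:Fin 2)+1=1 by decide, show (1:Fin 2)+1=0 by decide]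
  abel

lemma hprod (x y : R) (n : ℕ) (a b c d : Fin 2) :
    Tg x (n+1) a c * Tg y (n+1) b d
      = ∑ j : Fin 2, ∑ j' : Fin 2,
          (T1g x a j * T1g y b j') ⊗ₖ (Tg x n j c * Tg y n j' d) := by
  show (∑ j : Fin 2, T1g x a j ⊗ₖ Tg x n j c) * (∑ j : Fin 2, T1g y b j ⊗ₖ Tg y n j d) = _
  rw [Finset.sum_mul_sum]
  exact Finset.sum_congr rfl fun j _ => Finset.sum_congr rfl fun j' _ =>
    (Matrix.mul_kronecker_mul _ _ _ _).symm

/-- The RTT exchange relation at every level. -/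
lemma rtt (x y : R) : ∀ (n : ℕ) (a b c d : Fin 2),
    (1 - x*y) • (Tg x n a c * Tg y n b d) + (x - y) • (Tg x n (a+1) c * Tg y n (b+1) d)
      = (1 - x*y) • (Tg y n a c * Tg x n b d) + (x - y) • (Tg y n a (c+1) * Tg x n b (d+1))
  | 0, a, b, c, d => rtt0 x y a b c d
  | (n+1), a, b, c, d => by
    have ih := rtt x y n
    have h2 : ∀ j : Fin 2, j + 1 + 1 = j := by decide
    calc @id (Matrix (Fin 2 × Idx n) (Fin 2 × Idx n) R)
              ((1 - x*y) • (Tg x (n+1) a c * Tg y (n+1) b d)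
              + (x - y) • (Tg x (n+1) (a+1) c * Tg y (n+1) (b+1) d))
        = ∑ j : Fin 2, ∑ j' : Fin 2,
            ((1 - x*y) • (T1g x a j * T1g y b j')
              + (x - y) • (T1g x (a+1) j * T1g y (b+1) j'))
              ⊗ₖ (Tg x n j c * Tg y n j' d) := by
          rw [hprod, hprod]
          show (1 - x*y) • (∑ j : Fin 2, ∑ j' : Fin 2,
              (T1g x a j * T1g y b j') ⊗ₖ (Tg x n j c * Tg y n j' d))
            + (x - y) • (∑ j : Fin 2, ∑ j' : Fin 2,
              (T1g x (a+1) j * T1g y (b+1) j') ⊗ₖ (Tg x n j c * Tg y n j' d)) = _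
          rw [Finset.smul_sum, Finset.smul_sum, ← Finset.sum_add_distrib]
          refine Finset.sum_congr rfl fun j _ => ?_
          rw [Finset.smul_sum, Finset.smul_sum, ← Finset.sum_add_distrib]
          exact Finset.sum_congr rfl fun j' _ => kron_comb _ _ _ _ _
      _ = ∑ j : Fin 2, ∑ j' : Fin 2,
            ((1 - x*y) • ((T1g y a j * T1g x b j') ⊗ₖ (Tg x n j c * Tg y n j' d))
              + (x - y) • ((T1g y a (j+1) * T1g x b (j'+1)) ⊗ₖ (Tg x n j c * Tg y n j' d))) := by
          refine Finset.sum_congr rfl fun j _ => Finset.sum_congr rfl fun j' _ => ?_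
          rw [rtt0, ← kron_comb]
      _ = (∑ j : Fin 2, ∑ j' : Fin 2,
              (1 - x*y) • ((T1g y a j * T1g x b j') ⊗ₖ (Tg x n j c * Tg y n j' d)))
          + ∑ j : Fin 2, ∑ j' : Fin 2,
              (x - y) • ((T1g y a (j+1) * T1g x b (j'+1)) ⊗ₖ (Tg x n j c * Tg y n j' d)) := by
          simp only [Finset.sum_add_distrib]
      _ = (∑ j : Fin 2, ∑ j' : Fin 2,
              (1 - x*y) • ((T1g y a j * T1g x b j') ⊗ₖ (Tg x n j c * Tg y n j' d)))
          + ∑ j : Fin 2, ∑ j' : Fin 2,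
              (x - y) • ((T1g y a j * T1g x b j') ⊗ₖ (Tg x n (j+1) c * Tg y n (j'+1) d)) := by
          congr 1
          have base := sum_flip2 (fun J J' => (x - y) • ((T1g y a J * T1g x b J')
            ⊗ₖ (Tg x n (J+1) c * Tg y n (J'+1) d)))
          simp only [h2] at base
          exact base
      _ = ∑ j : Fin 2, ∑ j' : Fin 2,
            (T1g y a j * T1g x b j') ⊗ₖ
              ((1 - x*y) • (Tg x n j c * Tg y n j' d)
                + (x - y) • (Tg x n (j+1) c * Tg y n (j'+1) d)) := by
          rw [← Finset.sum_add_distrib]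
          refine Finset.sum_congr rfl fun j _ => ?_
          rw [← Finset.sum_add_distrib]
          exact Finset.sum_congr rfl fun j' _ => kron_comb' _ _ _ _ _
      _ = ∑ j : Fin 2, ∑ j' : Fin 2,
            (T1g y a j * T1g x b j') ⊗ₖ
              ((1 - x*y) • (Tg y n j c * Tg x n j' d)
                + (x - y) • (Tg y n j (c+1) * Tg x n j' (d+1))) := by
          exact Finset.sum_congr rfl fun j _ => Finset.sum_congr rfl fun j' _ => by
            rw [ih j j' c d]
      _ = @id (Matrix (Fin 2 × Idx n) (Fin 2 × Idx n) R)
          ((1 - x*y) • (Tg y (n+1) a c * Tg x (n+1) b d)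
          + (x - y) • (Tg y (n+1) a (c+1) * Tg x (n+1) b (d+1))) := by
          rw [hprod, hprod]
          show _ = (1 - x*y) • (∑ j : Fin 2, ∑ j' : Fin 2,
              (T1g y a j * T1g x b j') ⊗ₖ (Tg y n j c * Tg x n j' d))
            + (x - y) • (∑ j : Fin 2, ∑ j' : Fin 2,
              (T1g y a j * T1g x b j') ⊗ₖ (Tg y n j (c+1) * Tg x n j' (d+1)))
          rw [Finset.smul_sum, Finset.smul_sum, ← Finset.sum_add_distrib]
          refine Finset.sum_congr rfl fun j _ => ?_
          rw [Finset.smul_sum, Finset.smul_sum, ← Finset.sum_add_distrib]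
          exact Finset.sum_congr rfl fun j' _ => (kron_comb' _ _ _ _ _).symm

/-- Cancellation form of the commutation of transfer matrices, over a generic ring. -/
lemma gen_cancel (x y : R) (n : ℕ) :
    ((1 - x*y)^2 - (x - y)^2) •
        ((Tg x n 0 0 + Tg x n 1 1) * (Tg y n 0 0 + Tg y n 1 1))
      = ((1 - x*y)^2 - (x - y)^2) •
        ((Tg y n 0 0 + Tg y n 1 1) * (Tg x n 0 0 + Tg x n 1 1)) := by
  have h := rtt x y n
  have k1 := h 0 0 0 0; have k2 := h 1 1 1 1; have k3 := h 0 1 0 1; have k4 := h 1 0 1 0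
  have k5 := h 1 0 0 1; have k6 := h 0 1 1 0; have k7 := h 1 1 0 0; have k8 := h 0 0 1 1
  simp only [show (0:Fin 2)+1=1 by decide, show (1:Fin 2)+1=0 by decide]
    at k1 k2 k3 k4 k5 k6 k7 k8
  have e1 : (1-x*y) • ((Tg x n 0 0 + Tg x n 1 1) * (Tg y n 0 0 + Tg y n 1 1))
        + (x-y) • ((Tg x n 0 1 + Tg x n 1 0) * (Tg y n 0 1 + Tg y n 1 0))
      = (1-x*y) • ((Tg y n 0 0 + Tg y n 1 1) * (Tg x n 0 0 + Tg x n 1 1))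
        + (x-y) • ((Tg y n 0 1 + Tg y n 1 0) * (Tg x n 0 1 + Tg x n 1 0)) := by
    have hh := congrArg₂ (· + ·) (congrArg₂ (· + ·) k1 k2) (congrArg₂ (· + ·) k3 k4)
    simp only [mul_add, add_mul, smul_add] at hh ⊢
    abel_nf at hh ⊢
    exact hh
  have e2 : (1-x*y) • ((Tg x n 0 1 + Tg x n 1 0) * (Tg y n 0 1 + Tg y n 1 0))
        + (x-y) • ((Tg x n 0 0 + Tg x n 1 1) * (Tg y n 0 0 + Tg y n 1 1))
      = (1-x*y) • ((Tg y n 0 1 + Tg y n 1 0) * (Tg x n 0 1 + Tg x n 1 0))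
        + (x-y) • ((Tg y n 0 0 + Tg y n 1 1) * (Tg x n 0 0 + Tg x n 1 1)) := by
    have hh := congrArg₂ (· + ·) (congrArg₂ (· + ·) k5 k6) (congrArg₂ (· + ·) k7 k8)
    simp only [mul_add, add_mul, smul_add] at hh ⊢
    abel_nf at hh ⊢
    exact hh
  set sx := Tg x n 0 0 + Tg x n 1 1
  set sy := Tg y n 0 0 + Tg y n 1 1
  set px := Tg x n 0 1 + Tg x n 1 0
  set py := Tg y n 0 1 + Tg y n 1 0
  have g1 : ((1-x*y)*(1-x*y)) • (sx * sy) + ((1-x*y)*(x-y)) • (px * py)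
      = ((1-x*y)*(1-x*y)) • (sy * sx) + ((1-x*y)*(x-y)) • (py * px) := by
    have := congrArg (fun M => (1-x*y) • M) e1
    simpa [smul_add, smul_smul] using this
  have g2 : ((x-y)*(1-x*y)) • (px * py) + ((x-y)*(x-y)) • (sx * sy)
      = ((x-y)*(1-x*y)) • (py * px) + ((x-y)*(x-y)) • (sy * sx) := by
    have := congrArg (fun M => (x-y) • M) e2
    simpa [smul_add, smul_smul] using this
  have g2' : ((1-x*y)*(x-y)) • (px * py) + ((x-y)*(x-y)) • (sx * sy)
      = ((1-x*y)*(x-y)) • (py * px) + ((x-y)*(x-y)) • (sy * sx) := by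
    rw [mul_comm (1-x*y) (x-y)]; exact g2
  have comb := congrArg₂ (· - ·) g1 g2'
  calc ((1 - x*y)^2 - (x - y)^2) • (sx * sy)
      = (((1-x*y)*(1-x*y)) • (sx * sy) + ((1-x*y)*(x-y)) • (px * py))
        - (((1-x*y)*(x-y)) • (px * py) + ((x-y)*(x-y)) • (sx * sy)) := by
        rw [sub_smul, pow_two, pow_two]
        abel
    _ = (((1-x*y)*(1-x*y)) • (sy * sx) + ((1-x*y)*(x-y)) • (py * px))
        - (((1-x*y)*(x-y)) • (py * px) + ((x-y)*(x-y)) • (sy * sx)) := comb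
    _ = ((1 - x*y)^2 - (x - y)^2) • (sy * sx) := by
        rw [sub_smul, pow_two, pow_two]
        abel

end Generic

section Specialize
variable {R S : Type} [CommRing R] [CommRing S]

lemma T1g_map (f : R →+* S) (x : R) (i j a b : Fin 2) :
    f (T1g x i j a b) = T1g (f x) i j a b := by
  fin_cases i <;> fin_cases j <;> fin_cases a <;> fin_cases b <;>
    simp [T1g_00, T1g_01, T1g_10, T1g_11, Fin.mk_zero, Fin.mk_one]

lemma Tg_map (f : R →+* S) (x : R) :
    ∀ (n : ℕ) (i j : Fin 2) (a b : Idx n), f (Tg x n i j a b) = Tg (f x) n i j a b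
  | 0, i, j, a, b => T1g_map f x i j a b
  | (n+1), i, j, a, b => by
    obtain ⟨a1, a2⟩ := a
    obtain ⟨b1, b2⟩ := b
    rw [Tg_succ, Tg_succ]
    rw [Matrix.sum_apply, Matrix.sum_apply, map_sum]
    refine Finset.sum_congr rfl fun k _ => ?_
    show f (T1g x i k a1 b1 * Tg x n k j a2 b2) = T1g (f x) i k a1 b1 * Tg (f x) n k j a2 b2
    rw [_root_.map_mul, T1g_map, Tg_map f x n]

lemma Tg_eq_ABCD (x : ℝ) : ∀ n : ℕ,
    Tg x n 0 0 = (ABCD x n).1 ∧ Tg x n 0 1 = (ABCD x n).2.1 ∧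
      Tg x n 1 0 = (ABCD x n).2.2.1 ∧ Tg x n 1 1 = (ABCD x n).2.2.2
  | 0 => ⟨rfl, rfl, rfl, rfl⟩
  | n+1 => by
    obtain ⟨h1, h2, h3, h4⟩ := Tg_eq_ABCD x n
    refine ⟨?_, ?_, ?_, ?_⟩ <;>
      rw [Tg_succ, Fin.sum_univ_two] <;>
      simp only [T1g_00, T1g_01, T1g_10, T1g_11, h1, h2, h3, h4, ABCD] <;>
      first
        | rfl
        | exact add_comm _ _

end Specialize

theorem transfer_matrices_commute (x x' : ℝ) (n : ℕ) :
    (Amat x n + Dmat x n) * (Amat x' n + Dmat x' n)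
      = (Amat x' n + Dmat x' n) * (Amat x n + Dmat x n) := by
  classical
  set X0 : MvPolynomial (Fin 2) ℝ := MvPolynomial.X 0
  set X1 : MvPolynomial (Fin 2) ℝ := MvPolynomial.X 1
  have hc : ((1 - X0*X1)^2 - (X0 - X1)^2 : MvPolynomial (Fin 2) ℝ) ≠ 0 := by
    intro h
    have h2 := congrArg (MvPolynomial.eval (fun _ => (0:ℝ))) h
    simp [X0, X1] at h2
  have hgen := gen_cancel X0 X1 n
  have hpoly : (Tg X0 n 0 0 + Tg X0 n 1 1) * (Tg X1 n 0 0 + Tg X1 n 1 1)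
      = (Tg X1 n 0 0 + Tg X1 n 1 1) * (Tg X0 n 0 0 + Tg X0 n 1 1) := by
    refine Matrix.ext fun a b => ?_
    have hent : (((1 - X0*X1)^2 - (X0 - X1)^2) •
          ((Tg X0 n 0 0 + Tg X0 n 1 1) * (Tg X1 n 0 0 + Tg X1 n 1 1))) a b
        = (((1 - X0*X1)^2 - (X0 - X1)^2) •
          ((Tg X1 n 0 0 + Tg X1 n 1 1) * (Tg X0 n 0 0 + Tg X0 n 1 1))) a b := by
      rw [hgen]
    rw [Matrix.smul_apply, Matrix.smul_apply, smul_eq_mul, smul_eq_mul] at hent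
    exact mul_left_cancel₀ hc hent
  let f : MvPolynomial (Fin 2) ℝ →+* ℝ := (MvPolynomial.aeval ![x, x']).toRingHom
  have hf0 : f X0 = x := by simp [f, X0]
  have hf1 : f X1 = x' := by simp [f, X1]
  have hmap : ∀ (u : MvPolynomial (Fin 2) ℝ),
      (Tg u n 0 0 + Tg u n 1 1).map f = Tg (f u) n 0 0 + Tg (f u) n 1 1 := by
    intro u
    refine Matrix.ext fun a b => ?_
    rw [Matrix.map_apply, Matrix.add_apply, Matrix.add_apply, map_add,
      Tg_map f u n, Tg_map f u n]
  have hreal := congrArg (fun M => M.map f) hpoly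
  simp only [Matrix.map_mul, hmap, hf0, hf1] at hreal
  obtain ⟨hA, _, _, hD⟩ := Tg_eq_ABCD x n
  obtain ⟨hA', _, _, hD'⟩ := Tg_eq_ABCD x' n
  simpa [Amat, Dmat, hA, hD, hA', hD'] using hreal
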